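/- Let x ∈ X, α > 0 and h ∈ H. If p₁ ∈ H is a global minimum point of g_{α,x} and p₂ ∈ H is a global minimum point of g_{α,x+jh}, then ‖p₂ − p₁‖_H ≤ ‖h‖_H. In other words, the map sending h ∈ H to the minimizer of g_{α,x+jh} is Lipschitz continuous from H to H with Lipschitz constant at most 1. -/

import Mathlib

/-- The map sending `h` to the minimizer of `g_{α,x+jh}` is `1`-Lipschitz:
if `p₁` minimizes `g_{α,x}` and `p₂` minimizes `g_{α,x+jh}`, then `‖p₂ - p₁‖ ≤ ‖h‖`. -/
theorem minimizer_lipschitz {X H : Type*} [NormedAddCommGroup X]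
    [NormedSpace ℝ X] [CompleteSpace X] [NormedAddCommGroup H]
    [InnerProductSpace ℝ H] [CompleteSpace H]
    (j : H →L[ℝ] X) (hj : Function.Injective j)
    (f : X → ℝ) (hconv : ConvexOn ℝ Set.univ f) (hlsc : LowerSemicontinuous f)
    (x : X) (α : ℝ) (hα : 0 < α) (h p₁ p₂ : H)
    (hp₁ : ∀ k : H, f (x + j p₁) + ‖p₁‖ ^ 2 / (2 * α) ≤ f (x + j k) + ‖k‖ ^ 2 / (2 * α))
    (hp₂ : ∀ k : H, f (x + j h + j p₂) + ‖p₂‖ ^ 2 / (2 * α) ≤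
      f (x + j h + j k) + ‖k‖ ^ 2 / (2 * α)) :
    ‖p₂ - p₁‖ ≤ ‖h‖ := by
  set m₁ : H := (2:ℝ)⁻¹ • (p₁ + (h + p₂)) with hm₁
  set m₂ : H := (2:ℝ)⁻¹ • (p₂ + (p₁ - h)) with hm₂
  -- both midpoints give the same point in X
  have he₁ : x + j m₁ = (2:ℝ)⁻¹ • (x + j p₁) + (2:ℝ)⁻¹ • (x + j h + j p₂) := by
    simp only [hm₁, map_smul, map_add]
    module
  have he₂ : x + j h + j m₂ = x + j m₁ := by
    simp only [hm₁, hm₂, map_smul, map_add, map_sub]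
    module
  -- convexity of f at the midpoint
  have hC : f (x + j m₁) ≤ (2:ℝ)⁻¹ * f (x + j p₁) + (2:ℝ)⁻¹ * f (x + j h + j p₂) := by
    have := hconv.2 (Set.mem_univ (x + j p₁)) (Set.mem_univ (x + j h + j p₂))
      (by norm_num : (0:ℝ) ≤ 2⁻¹) (by norm_num : (0:ℝ) ≤ 2⁻¹) (by norm_num)
    rw [he₁]; simpa using this
  have h₁ := hp₁ m₁
  have h₂ := hp₂ m₂
  rw [he₂] at h₂
  -- deduce the norm inequality
  have hnorm : ‖p₁‖ ^ 2 + ‖p₂‖ ^ 2 ≤ ‖m₁‖ ^ 2 + ‖m₂‖ ^ 2 := by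
    have h2α : 0 < 2 * α := by linarith
    have h3 : (‖p₁‖ ^ 2 + ‖p₂‖ ^ 2) / (2 * α) ≤ (‖m₁‖ ^ 2 + ‖m₂‖ ^ 2) / (2 * α) := by
      rw [add_div, add_div]
      linarith [h₁, h₂, hC]
    rw [div_le_div_iff₀ h2α h2α] at h3
    nlinarith [h3]
  -- norm identity via inner products
  have hkey : ‖m₁‖ ^ 2 + ‖m₂‖ ^ 2 + ‖p₂ - p₁‖ ^ 2 / 2
      = ‖p₁‖ ^ 2 + ‖p₂‖ ^ 2 + ‖h‖ ^ 2 / 2 := by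
    simp only [hm₁, hm₂, ← real_inner_self_eq_norm_sq, inner_smul_left, inner_smul_right,
      inner_add_left, inner_add_right, inner_sub_left, inner_sub_right,
      RCLike.conj_to_real]
    rw [real_inner_comm p₂ p₁, real_inner_comm h p₁, real_inner_comm h p₂]
    ring
  have : ‖p₂ - p₁‖ ^ 2 ≤ ‖h‖ ^ 2 := by linarith
  nlinarith [norm_nonneg (p₂ - p₁), norm_nonneg h]
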